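/- arXiv:1903.03229 — 4 statements merged into one kernel-verified Lean document; each statement's English description precedes it below -/
import Mathlib

section
/- Correctness of hash-index introduction (equality filter elimination): let r : List α be a relation, e : α → K a key expression into a type K with decidable equality, and k : K a lookup key. Define the partition keys qk := (r.map e).dedup and the partition values qv x := r.filter (fun t => e t = x). Then r.filter (fun t => e t = k) is a permutation of (equivalently, equal as multisets to) qk.bind (fun x => (qv x).filter (fun t => e t = k)). -/
private lemma bind_ite {α K : Type*} [DecidableEq K] (l : List K) (hl : l.Nodup)
    (k : K) (s : List α) :
    l.flatMap (fun x => if x = k then s else []) = if k ∈ l then s else [] := by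
  induction l with
  | nil => simp
  | cons a t ih =>
    simp only [List.nodup_cons] at hl
    rw [show (a :: t).flatMap (fun x => if x = k then s else []) = (if a = k then s else []) ++ t.flatMap (fun x => if x = k then s else []) from rfl, ih hl.2]
    by_cases h : a = k
    · subst h
      simp [hl.1]
    · simp [h, Ne.symm h]

theorem hash_index_intro {α K : Type*} [DecidableEq K] (r : List α) (e : α → K) (k : K) :
    (r.filter (fun t => decide (e t = k))).Perm
      (((r.map e).dedup).flatMap
        (fun x => (r.filter (fun t => decide (e t = x))).filter (fun t => decide (e t = k)))) := by
  have hinner : ∀ x : K,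
      (r.filter (fun t => decide (e t = x))).filter (fun t => decide (e t = k))
        = if x = k then r.filter (fun t => decide (e t = k)) else [] := by
    intro x
    by_cases h : x = k
    · subst h; simp [List.filter_filter]
    · simp only [if_neg h, List.filter_filter, List.filter_eq_nil_iff]
      intro a _
      simp only [Bool.and_eq_true, decide_eq_true_eq]
      rintro ⟨h1, h2⟩
      exact h (h2 ▸ h1)
  have : ((r.map e).dedup).flatMap
      (fun x => (r.filter (fun t => decide (e t = x))).filter (fun t => decide (e t = k)))
      = if k ∈ (r.map e).dedup then r.filter (fun t => decide (e t = k)) else [] := by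
    rw [show (fun x => (r.filter (fun t => decide (e t = x))).filter (fun t => decide (e t = k)))
        = fun x => if x = k then r.filter (fun t => decide (e t = k)) else []
      from funext hinner]
    exact bind_ite _ (List.nodup_dedup _) _ _
  rw [this]
  by_cases hk : k ∈ (r.map e).dedup
  · simp [hk]
  · rw [if_neg hk]
    have : r.filter (fun t => decide (e t = k)) = [] := by
      rw [List.filter_eq_nil_iff]
      intro a ha
      simp only [decide_eq_true_eq]
      intro h
      exact hk (List.mem_dedup.mpr (List.mem_map.mpr ⟨a, ha, h⟩))
    rw [this]
end

section
/- Correctness of the ordered-index introduction rule: let r : List α be a relation, e : α → K with K a linear order and decidable equality, and lo hi : K. Define qk := (r.map e).dedup and qv x := r.filter (fun t => e t = x). Then r.filter (fun t => lo ≤ e t ∧ e t ≤ hi) is a permutation of qk.bind (fun x => (qv x).filter (fun t => lo ≤ x ∧ x ≤ hi)) (where the bound check uses the key x, equivalently e t). -/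
theorem ordered_index_intro {α K : Type*} [LinearOrder K] (r : List α) (e : α → K) (lo hi : K) :
    (r.filter (fun t => decide (lo ≤ e t ∧ e t ≤ hi))).Perm
      (((r.map e).dedup).flatMap
        (fun x => (r.filter (fun t => decide (e t = x))).filter
          (fun _ => decide (lo ≤ x ∧ x ≤ hi)))) := by
  classical
  rw [List.perm_iff_count]
  intro a
  rw [List.count_flatMap]
  rw [List.sum_map_eq_nsmul_single (e a)
    (fun x => (List.count a ∘ fun x => (r.filter (fun t => decide (e t = x))).filter
      (fun _ => decide (lo ≤ x ∧ x ≤ hi))) x)]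
  · by_cases hp : lo ≤ e a ∧ e a ≤ hi
    · simp only [Function.comp, hp]
      rw [List.count_filter (by simp [hp]), List.count_filter (by simp [hp]), List.count_dedup]
      by_cases ha : a ∈ r
      · have : e a ∈ r.map e := List.mem_map_of_mem (f := e) ha
        simp [this]
      · simp only [List.count_eq_zero_of_not_mem ha]
        have : List.count a (r.filter fun t => decide (e t = e a)) = 0 := by
          apply List.count_eq_zero_of_not_mem
          intro h; exact ha (List.mem_of_mem_filter h)
        simp [this]
    · have : (fun t => decide (lo ≤ e t ∧ e t ≤ hi)) a = false := by simp [hp]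
      rw [List.count_eq_zero_of_not_mem (fun h => by
        have := List.of_mem_filter h; simp at this; exact hp this)]
      simp [Function.comp, hp]
  · intro x hx _
    simp only [Function.comp]
    apply List.count_eq_zero_of_not_mem
    intro h
    have := List.mem_of_mem_filter h
    have := List.of_mem_filter this
    simp at this
    exact hx this.symm
end

section
/- Correctness of join materialization as a list of pairs: let r : List α and s : List β be relations, e : α → K and e' : β → K key functions with DecidableEq K. Then the equi-join join(e = e', r, s) := (r.bind (fun a => s.map (fun b => (a,b)))).filter (fun (a,b) => e a = e' b) is a permutation of ((r.map e).dedup).bind (fun x => (r.filter (fun a => e a = x)).bind (fun a => (s.filter (fun b => e' b = x)).map (fun b => (a,b)))). -/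
open List

lemma mcount_bind_pairs {α β : Type*} [DecidableEq α] [DecidableEq β]
    (a : α) (b : β) (r : Multiset α) (s : Multiset β) :
    Multiset.count (a, b) (r.bind fun a' => s.map fun b' => (a', b'))
      = r.count a * s.count b := by
  induction r using Multiset.induction_on with
  | empty => simp
  | cons a' r ih =>
    rw [Multiset.cons_bind, Multiset.count_add, ih, Multiset.count_cons]
    by_cases h : a' = a
    · have hmap : Multiset.count (a, b) (s.map fun b' => (a', b')) = s.count b := by
        rw [h]
        exact Multiset.count_map_eq_count' _ _ (fun x y hxy => by simpa using hxy) _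
      rw [hmap]
      simp [h, Nat.add_mul, Nat.add_comm]
    · have hmap : Multiset.count (a, b) (s.map fun b' => (a', b')) = 0 := by
        rw [Multiset.count_eq_zero]
        intro hm
        rw [Multiset.mem_map] at hm
        obtain ⟨b', _, hb⟩ := hm
        exact h (congrArg Prod.fst hb)
      simp only [hmap, h, if_false, Nat.zero_add]
      simp [h]
      exact Or.inl (fun hh => h hh.symm)

theorem join_as_list_of_pairs {α β K : Type*} [DecidableEq K]
    (r : List α) (s : List β) (e : α → K) (e' : β → K) :
    ((r.flatMap (fun a => s.map (fun b => (a, b)))).filter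
        (fun p => decide (e p.1 = e' p.2))).Perm
      (((r.map e).dedup).flatMap (fun x =>
        (r.filter (fun a => decide (e a = x))).flatMap (fun a =>
          (s.filter (fun b => decide (e' b = x))).map (fun b => (a, b))))) := by
  classical
  rw [← Multiset.coe_eq_coe]
  simp only [List.bind_eq_flatMap, ← Multiset.coe_bind, ← Multiset.map_coe,
    ← Multiset.filter_coe, ← Multiset.coe_dedup]
  ext ⟨a, b⟩
  rw [Multiset.count_filter, mcount_bind_pairs, Multiset.count_bind]
  have hterm : ∀ x : K,
      Multiset.count (a, b)
        ((Multiset.filter (fun a => e a = x) ↑r).bind fun a =>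
          (Multiset.filter (fun b => e' b = x) ↑s).map fun b => (a, b))
        = (if e a = x then Multiset.count a (↑r : Multiset α) else 0) *
          (if e' b = x then Multiset.count b (↑s : Multiset β) else 0) := by
    intro x
    rw [mcount_bind_pairs, Multiset.count_filter, Multiset.count_filter]
  simp only [hterm]
  have hsum : (Multiset.map (fun x =>
      (if e a = x then Multiset.count a (↑r : Multiset α) else 0) *
      (if e' b = x then Multiset.count b (↑s : Multiset β) else 0))
      (Multiset.dedup (Multiset.map e ↑r))).sum
      = ∑ x ∈ (Multiset.map e (↑r : Multiset α)).toFinset,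
          (if e a = x then Multiset.count a (↑r : Multiset α) else 0) *
          (if e' b = x then Multiset.count b (↑s : Multiset β) else 0) := rfl
  rw [hsum]
  by_cases h : e a = e' b
  · simp only [if_pos rfl, ← h]
    rw [Finset.sum_eq_single (e a)]
    · simp
    · intro x hx hne
      simp [Ne.symm hne, fun hh : e a = x => hne hh.symm]
    · intro hnotin
      have : a ∉ r := fun ha => hnotin (by simp [Multiset.mem_toFinset]; exact ⟨a, ha, rfl⟩)
      simp [Multiset.count_eq_zero_of_notMem, this]
  · rw [if_neg h]
    rw [Finset.sum_eq_zero]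
    intro x hx
    by_cases hx1 : e a = x
    · have : ¬ e' b = x := fun hh => h (hx1.trans hh.symm)
      simp [this]
    · simp [hx1]
end

section
/- Correctness of the hash-join materialization: for r : List α, s : List β, keys e : α → K, e' : β → K with DecidableEq K, the equi-join r.bind (fun a => (s.filter (fun b => e' b = e a)).map (fun b => (a,b))) equals r.bind (fun a => (((s.map e').dedup).bind (fun x => if x = e a then (s.filter (fun b => e' b = x)).map (fun b => (a,b)) else [])) ) up to permutation (in fact, exact equality holds). -/
lemma bind_if_eq_nodup {K γ : Type*} [DecidableEq K] (l : List K) (hl : l.Nodup)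
    (k : K) (f : K → List γ) :
    l.flatMap (fun x => if x = k then f x else []) = if k ∈ l then f k else [] := by
  induction l with
  | nil => simp
  | cons a t ih =>
    simp only [List.nodup_cons] at hl
    rw [List.flatMap_cons]
    rw [show (t.flatMap fun x => if x = k then f x else []) = _ from ih hl.2]
    simp only [List.mem_cons]
    by_cases hak : a = k
    · subst hak
      simp [hl.1]
    · simp [hak, Ne.symm hak]

theorem hash_join_materialization {α β K : Type*} [DecidableEq K]
    (r : List α) (s : List β) (e : α → K) (e' : β → K) :
    r.flatMap (fun a => (s.filter (fun b => decide (e' b = e a))).map (fun b => (a, b)))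
      = r.flatMap (fun a => ((s.map e').dedup).flatMap (fun x =>
          if x = e a then (s.filter (fun b => decide (e' b = x))).map (fun b => (a, b))
          else [])) := by
  apply List.flatMap_congr
  intro a _
  rw [bind_if_eq_nodup _ (List.nodup_dedup _)]
  by_cases h : e a ∈ (s.map e').dedup
  · simp [h]
  · simp only [h, if_false]
    rw [List.mem_dedup, List.mem_map] at h
    push_neg at h
    rw [List.map_eq_nil_iff, List.filter_eq_nil_iff]
    intro b hb
    simpa using h b hb
end
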